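/- A numerical semigroup S is a maximal element (under inclusion) of the set of perfect numerical semigroups with Frobenius number F if and only if S is maximal in the set of all numerical semigroups T with T ∩ {F-1, F} = ∅. -/

import Mathlib

def IsNumericalSemigroup (S : Set ℕ) : Prop :=
  0 ∈ S ∧ (∀ a ∈ S, ∀ b ∈ S, a + b ∈ S) ∧ Sᶜ.Finite

def HasFrobenius (S : Set ℕ) (F : ℕ) : Prop :=
  F ∉ S ∧ ∀ n, F < n → n ∈ S

def IsIsolatedGap (S : Set ℕ) (h : ℕ) : Prop :=
  h ∉ S ∧ h - 1 ∈ S ∧ h + 1 ∈ S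

def IsPerfect (S : Set ℕ) : Prop := ∀ h, ¬ IsIsolatedGap S h

def Delta (F : ℕ) : Set ℕ := {0} ∪ {n | F + 1 ≤ n}

def IsSpecialGap (S : Set ℕ) (x : ℕ) : Prop :=
  x ∉ S ∧ 2 * x ∈ S ∧ ∀ s ∈ S, s ≠ 0 → x + s ∈ S

def IsMinimalGenerator (S : Set ℕ) (x : ℕ) : Prop :=
  x ∈ S ∧ x ≠ 0 ∧ ∀ a ∈ S, ∀ b ∈ S, a ≠ 0 → b ≠ 0 → x ≠ a + b

lemma avoid_iff (S : Set ℕ) (F : ℕ) :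
    S ∩ {F - 1, F} = ∅ ↔ F - 1 ∉ S ∧ F ∉ S := by
  rw [Set.eq_empty_iff_forall_notMem]
  constructor
  · intro h
    exact ⟨fun hm => h (F-1) ⟨hm, Or.inl rfl⟩, fun hm => h F ⟨hm, Or.inr rfl⟩⟩
  · rintro ⟨h1, h2⟩ x ⟨hx, hx2⟩
    rcases hx2 with rfl | rfl
    exacts [h1 hx, h2 hx]

/-- key lemma: a semigroup maximal among those avoiding {F-1, F} is perfect with
Frobenius number F. -/
lemma key_lemma (F : ℕ) (hF : 2 ≤ F) (U : Set ℕ) (hU : IsNumericalSemigroup U)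
    (h1 : F - 1 ∉ U) (h2 : F ∉ U)
    (hmax : ∀ T : Set ℕ, IsNumericalSemigroup T → F - 1 ∉ T → F ∉ T → U ⊆ T → T = U) :
    IsPerfect U ∧ HasFrobenius U F := by
  obtain ⟨h0, hadd, hfin⟩ := hU
  have hfrob : HasFrobenius U F := by
    refine ⟨h2, fun n hn => ?_⟩
    have heq := hmax (U ∪ {m | F < m}) ⟨Or.inl h0, ?_, ?_⟩ ?_ ?_ Set.subset_union_left
    · rw [← heq]; exact Or.inr hn
    · rintro a (ha | ha) b (hb | hb)
      · exact Or.inl (hadd _ ha _ hb)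
      · exact Or.inr (by simp only [Set.mem_setOf_eq] at hb ⊢; omega)
      · exact Or.inr (by simp only [Set.mem_setOf_eq] at ha ⊢; omega)
      · exact Or.inr (by simp only [Set.mem_setOf_eq] at ha hb ⊢; omega)
    · exact Set.Finite.subset hfin (by intro x hx; exact fun hxU => hx (Or.inl hxU))
    · rintro (hx | hx)
      · exact h1 hx
      · simp only [Set.mem_setOf_eq] at hx; omega
    · rintro (hx | hx)
      · exact h2 hx
      · simp only [Set.mem_setOf_eq] at hx; omega
  refine ⟨fun h hgap => ?_, hfrob⟩
  obtain ⟨hh, hm1, hp1⟩ := hgap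
  have hpos : 1 ≤ h := by
    rcases Nat.eq_zero_or_pos h with rfl | hp
    · exact absurd h0 hh
    · exact hp
  have h2h : h + h ∈ U := by
    have := hadd _ hm1 _ hp1
    have e : (h - 1) + (h + 1) = h + h := by omega
    rwa [e] at this
  set W := U ∪ {x | ∃ s ∈ U, x = h + s} with hW
  have hWns : IsNumericalSemigroup W := by
    refine ⟨Or.inl h0, ?_, Set.Finite.subset hfin ?_⟩
    · rintro a (ha | ⟨s, hs, rfl⟩) b (hb | ⟨t, ht, rfl⟩)
      · exact Or.inl (hadd _ ha _ hb)
      · exact Or.inr ⟨t + a, hadd _ ht _ ha, by ring⟩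
      · exact Or.inr ⟨s + b, hadd _ hs _ hb, by ring⟩
      · refine Or.inl ?_
        have := hadd _ h2h _ (hadd _ hs _ ht)
        have e : (h + h) + (s + t) = (h + s) + (h + t) := by ring
        rwa [e] at this
    · intro x hx
      exact fun hxU => hx (Or.inl hxU)
  have hW1 : F - 1 ∉ W := by
    rintro (hx | ⟨s, hs, hsx⟩)
    · exact h1 hx
    · have hmem : (h + 1) + s ∈ U := hadd _ hp1 _ hs
      have e : (h + 1) + s = F := by omega
      rw [e] at hmem
      exact h2 hmem
  have hW2 : F ∉ W := by
    rintro (hx | ⟨s, hs, hsx⟩)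
    · exact h2 hx
    · have hmem : (h - 1) + s ∈ U := hadd _ hm1 _ hs
      have e : (h - 1) + s = F - 1 := by omega
      rw [e] at hmem
      exact h1 hmem
  have heq := hmax W hWns hW1 hW2 Set.subset_union_left
  have hmem : h ∈ U := by
    rw [← heq]
    exact Or.inr ⟨0, h0, by simp⟩
  exact hh hmem

/-- existence of a maximal avoiding semigroup above a given avoiding semigroup that
contains everything above F. -/
lemma exists_max (F : ℕ) (hF : 2 ≤ F) (T : Set ℕ) (hT : IsNumericalSemigroup T)
    (h1 : F - 1 ∉ T) (h2 : F ∉ T) (htop : ∀ n, F < n → n ∈ T) :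
    ∃ U, IsNumericalSemigroup U ∧ F - 1 ∉ U ∧ F ∉ U ∧ T ⊆ U ∧
      ∀ V, IsNumericalSemigroup V → F - 1 ∉ V → F ∉ V → U ⊆ V → V = U := by
  set A : Set (Set ℕ) := {V | IsNumericalSemigroup V ∧ F - 1 ∉ V ∧ F ∉ V ∧ T ⊆ V} with hA
  have hfinA : A.Finite := by
    have hinj : Set.InjOn (fun V => V ∩ {n | n < F}) A := by
      intro B hB C hC hBC
      obtain ⟨_, hB1, hB2, hBT⟩ := hB
      obtain ⟨_, hC1, hC2, hCT⟩ := hC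
      simp only [] at hBC
      ext x
      rcases lt_trichotomy x F with hx | rfl | hx
      · constructor
        · intro hxB
          have : x ∈ C ∩ {n | n < F} := by rw [← hBC]; exact ⟨hxB, hx⟩
          exact this.1
        · intro hxC
          have : x ∈ B ∩ {n | n < F} := by rw [hBC]; exact ⟨hxC, hx⟩
          exact this.1
      · exact ⟨fun hx => absurd hx hB2, fun hx => absurd hx hC2⟩
      · exact ⟨fun _ => hCT (htop x hx), fun _ => hBT (htop x hx)⟩
    have himg : ((fun V => V ∩ {n | n < F}) '' A).Finite := by
      refine Set.Finite.subset (Set.Finite.finite_subsets (Set.finite_Iio F)) ?_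
      rintro _ ⟨V, _, rfl⟩
      intro x hx
      exact hx.2
    exact Set.Finite.of_finite_image himg hinj
  have hne : A.Nonempty := ⟨T, hT, h1, h2, subset_refl T⟩
  obtain ⟨U, hUA, hUmax⟩ := Set.Finite.exists_maximalFor id A hfinA hne
  obtain ⟨hUns, hU1, hU2, hUT⟩ := hUA
  refine ⟨U, hUns, hU1, hU2, hUT, fun V hVns hV1 hV2 hUV => ?_⟩
  have hVA : V ∈ A := ⟨hVns, hV1, hV2, hUT.trans hUV⟩
  exact Set.Subset.antisymm (hUmax hVA hUV) hUV

theorem stmt_9 (S : Set ℕ) (F : ℕ) (hF : 2 ≤ F) (hS : IsNumericalSemigroup S) :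
    (IsPerfect S ∧ HasFrobenius S F ∧
      ∀ T : Set ℕ, IsNumericalSemigroup T → IsPerfect T → HasFrobenius T F →
        S ⊆ T → T = S) ↔
    (S ∩ {F - 1, F} = ∅ ∧
      ∀ T : Set ℕ, IsNumericalSemigroup T → T ∩ {F - 1, F} = ∅ →
        S ⊆ T → T = S) := by
  -- auxiliary: a perfect semigroup with Frobenius F avoids {F-1, F}
  have perfect_avoids : ∀ T : Set ℕ, IsPerfect T → HasFrobenius T F →
      F - 1 ∉ T ∧ F ∉ T := by
    intro T hP hFr
    refine ⟨fun hmem => ?_, hFr.1⟩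
    exact hP F ⟨hFr.1, hmem, hFr.2 (F + 1) (Nat.lt_succ_self F)⟩
  constructor
  · rintro ⟨hperf, hfrob, hmaxP⟩
    have havoid := perfect_avoids S hperf hfrob
    refine ⟨(avoid_iff S F).2 havoid, fun T hTns hTav hST => ?_⟩
    obtain ⟨hT1, hT2⟩ := (avoid_iff T F).1 hTav
    have htop : ∀ n, F < n → n ∈ T := fun n hn => hST (hfrob.2 n hn)
    obtain ⟨U, hUns, hU1, hU2, hTU, hUmax⟩ := exists_max F hF T hTns hT1 hT2 htop
    obtain ⟨hUperf, hUfrob⟩ := key_lemma F hF U hUns hU1 hU2 hUmax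
    have hUS : U = S := hmaxP U hUns hUperf hUfrob (hST.trans hTU)
    exact Set.Subset.antisymm (hUS ▸ hTU) hST
  · rintro ⟨havoid, hmaxA⟩
    obtain ⟨h1, h2⟩ := (avoid_iff S F).1 havoid
    have hmax' : ∀ T : Set ℕ, IsNumericalSemigroup T → F - 1 ∉ T → F ∉ T → S ⊆ T → T = S :=
      fun T hTns hT1 hT2 hST => hmaxA T hTns ((avoid_iff T F).2 ⟨hT1, hT2⟩) hST
    obtain ⟨hperf, hfrob⟩ := key_lemma F hF S hS h1 h2 hmax'
    refine ⟨hperf, hfrob, fun T hTns hTperf hTfrob hST => ?_⟩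
    obtain ⟨hT1, hT2⟩ := perfect_avoids T hTperf hTfrob
    exact hmax' T hTns hT1 hT2 hST
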